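/- Fix an integer d ≥ 2 and a unit vector ψ ∈ ℂ^d, and set Q := (|ψ⟩⟨ψ|)ᵀ = |ψ̄⟩⟨ψ̄|. Define the performance operator on ℂ^d_I ⊗ ℂ^d_O ⊗ ℂ^d_F by Ω := (1/(2 d_S)) · (1_d + Q)_I ⊗ P^S_{OF} + (1/(2 d_A)) · (1_d − Q)_I ⊗ P^A_{OF}, where 1_d + Q and 1_d − Q act on the factor I and P^S, P^A act on the factors O, F. Then the maximum of Tr(S Ω) over all single-call deterministic superchannels S equals 1 if d = 2 and equals 2/(d+1) if d > 2, and it is attained. This quantity is the optimal average fidelity of a deterministic single-call protocol transforming an arbitrary unknown U ∈ SU(d) into the state U̅|ψ⟩⟨ψ|Uᵀ on the known pure state ψ. -/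

import Mathlib

open Matrix Kronecker BigOperators ComplexOrder

noncomputable section

/-- Entrywise complex conjugate `U̅` of a matrix. -/
def mconj {d : ℕ} (U : Matrix (Fin d) (Fin d) ℂ) : Matrix (Fin d) (Fin d) ℂ :=
  U.map (starRingEnd ℂ)

/-- Rank-one outer product `|v⟩⟨v|`. -/
def outer {n : Type*} (v : n → ℂ) : Matrix n n ℂ :=
  Matrix.vecMulVec v (star v)

/-- Choi vector `|U⟩⟩ = Σ_i e_i ⊗ U e_i`. -/
def choiVec {d : ℕ} (U : Matrix (Fin d) (Fin d) ℂ) : Fin d × Fin d → ℂ :=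
  fun p => U p.2 p.1

/-- `|U⟩⟩⟨⟨U|`. -/
def choiProj {d : ℕ} (U : Matrix (Fin d) (Fin d) ℂ) :
    Matrix (Fin d × Fin d) (Fin d × Fin d) ℂ :=
  outer (choiVec U)

/-- Partial trace over the first tensor factor. -/
def ptrLeft {α β : Type*} [Fintype α] (S : Matrix (α × β) (α × β) ℂ) :
    Matrix β β ℂ :=
  fun b b' => ∑ a, S (a, b) (a, b')

/-- Partial trace over the second (last) tensor factor. -/
def ptrRight {α β : Type*} [Fintype β] (S : Matrix (α × β) (α × β) ℂ) :
    Matrix α α ℂ :=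
  fun a a' => ∑ b, S (a, b) (a', b)

/-- Action `S ⋆ U := Tr_{IO}[ S · (|U̅⟩⟩⟨⟨U̅|_{IO} ⊗ 1_F) ]` of a single-call
supermap `S` on `I ⊗ O ⊗ F` applied to the unitary channel given by `U`. -/
def act {d dF : ℕ}
    (S : Matrix ((Fin d × Fin d) × Fin dF) ((Fin d × Fin d) × Fin dF) ℂ)
    (U : Matrix (Fin d) (Fin d) ℂ) : Matrix (Fin dF) (Fin dF) ℂ :=
  ptrLeft (S * (choiProj (mconj U) ⊗ₖ (1 : Matrix (Fin dF) (Fin dF) ℂ)))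

/-- A single-call deterministic superchannel (channels-to-states):
`S ≥ 0` with `Tr_F(S) = σ ⊗ 1_d`, `σ ≥ 0`, `Tr σ = 1`. -/
def IsSuperchannel {d dF : ℕ}
    (S : Matrix ((Fin d × Fin d) × Fin dF) ((Fin d × Fin d) × Fin dF) ℂ) : Prop :=
  S.PosSemidef ∧
    ∃ σ : Matrix (Fin d) (Fin d) ℂ, σ.PosSemidef ∧ σ.trace = 1 ∧
      ptrRight S = σ ⊗ₖ (1 : Matrix (Fin d) (Fin d) ℂ)

/-- The flip (SWAP) operator on `ℂ^d ⊗ ℂ^d`. -/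
def swapMat (d : ℕ) : Matrix (Fin d × Fin d) (Fin d × Fin d) ℂ :=
  fun x y => if x.1 = y.2 ∧ x.2 = y.1 then 1 else 0

/-- Projector onto the symmetric subspace, `P^S = (1 + SWAP)/2`. -/
def Psym (d : ℕ) : Matrix (Fin d × Fin d) (Fin d × Fin d) ℂ :=
  (2 : ℂ)⁻¹ • ((1 : Matrix (Fin d × Fin d) (Fin d × Fin d) ℂ) + swapMat d)

/-- Projector onto the antisymmetric subspace, `P^A = (1 − SWAP)/2`. -/
def Pasym (d : ℕ) : Matrix (Fin d × Fin d) (Fin d × Fin d) ℂ :=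
  (2 : ℂ)⁻¹ • ((1 : Matrix (Fin d × Fin d) (Fin d × Fin d) ℂ) - swapMat d)

/-- The performance operator
`Ω = (1/(2 d_S))·(1 + Q)_I ⊗ P^S_{OF} + (1/(2 d_A))·(1 − Q)_I ⊗ P^A_{OF}` with
`Q = (|ψ⟩⟨ψ|)ᵀ`, `d_S = d(d+1)/2`, `d_A = d(d−1)/2`, written on the index order
`(I × O) × F`. -/
def OmegaConj {d : ℕ} (ψ : Fin d → ℂ) :
    Matrix ((Fin d × Fin d) × Fin d) ((Fin d × Fin d) × Fin d) ℂ :=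
  fun x y =>
    (2 * ((d : ℂ) * ((d : ℂ) + 1) / 2))⁻¹ *
        ((1 : Matrix (Fin d) (Fin d) ℂ) + (outer ψ)ᵀ) x.1.1 y.1.1 *
        Psym d (x.1.2, x.2) (y.1.2, y.2)
    + (2 * ((d : ℂ) * ((d : ℂ) - 1) / 2))⁻¹ *
        ((1 : Matrix (Fin d) (Fin d) ℂ) - (outer ψ)ᵀ) x.1.1 y.1.1 *
        Pasym d (x.1.2, x.2) (y.1.2, y.2)
section AuxLemmas

open Finset

variable {d dF : ℕ}

/-- Tensor in the order `(I ⊗ O) ⊗ F` of a matrix on `I` and a matrix on `O ⊗ F`. -/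
def kron3 (ρ : Matrix (Fin d) (Fin d) ℂ)
    (K : Matrix (Fin d × Fin dF) (Fin d × Fin dF) ℂ) :
    Matrix ((Fin d × Fin d) × Fin dF) ((Fin d × Fin d) × Fin dF) ℂ :=
  (ρ ⊗ₖ K).submatrix (Equiv.prodAssoc (Fin d) (Fin d) (Fin dF))
    (Equiv.prodAssoc (Fin d) (Fin d) (Fin dF))

lemma kron3_apply (ρ : Matrix (Fin d) (Fin d) ℂ)
    (K : Matrix (Fin d × Fin dF) (Fin d × Fin dF) ℂ) (x y) :
    kron3 ρ K x y = ρ x.1.1 y.1.1 * K (x.1.2, x.2) (y.1.2, y.2) := rfl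

lemma kron3_mul (ρ ρ' : Matrix (Fin d) (Fin d) ℂ)
    (K K' : Matrix (Fin d × Fin dF) (Fin d × Fin dF) ℂ) :
    kron3 ρ K * kron3 ρ' K' = kron3 (ρ * ρ') (K * K') := by
  unfold kron3
  rw [Matrix.submatrix_mul_equiv, Matrix.mul_kronecker_mul]

lemma trace_submatrix_equiv' {m n : Type*} [Fintype m] [Fintype n]
    (M : Matrix n n ℂ) (e : m ≃ n) : (M.submatrix e e).trace = M.trace :=
  Fintype.sum_equiv e _ _ (fun _ => rfl)

lemma trace_kron3 (ρ : Matrix (Fin d) (Fin d) ℂ)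
    (K : Matrix (Fin d × Fin dF) (Fin d × Fin dF) ℂ) :
    (kron3 ρ K).trace = ρ.trace * K.trace := by
  unfold kron3
  rw [trace_submatrix_equiv', Matrix.trace_kronecker]

lemma kronecker_conjTranspose' {m n : Type*} (A : Matrix m m ℂ) (B : Matrix n n ℂ) :
    (A ⊗ₖ B)ᴴ = Aᴴ ⊗ₖ Bᴴ := by
  ext x y
  simp [Matrix.conjTranspose_apply, Matrix.kroneckerMap_apply]

open scoped MatrixOrder in
lemma posSemidef_iff_eq_transpose_mul_self' {n : Type*} [Fintype n] [DecidableEq n]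
    {A : Matrix n n ℂ} : A.PosSemidef ↔ ∃ B : Matrix n n ℂ, A = Bᴴ * B := by
  constructor
  · intro h
    obtain ⟨B, hB⟩ := CStarAlgebra.nonneg_iff_eq_star_mul_self.mp h.nonneg
    exact ⟨B, hB⟩
  · rintro ⟨B, rfl⟩
    exact Matrix.posSemidef_conjTranspose_mul_self B

lemma kron3_posSemidef {ρ : Matrix (Fin d) (Fin d) ℂ}
    {K : Matrix (Fin d × Fin dF) (Fin d × Fin dF) ℂ}
    (hρ : ρ.PosSemidef) (hK : K.PosSemidef) : (kron3 ρ K).PosSemidef := by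
  obtain ⟨A, hA⟩ := posSemidef_iff_eq_transpose_mul_self'.mp hρ
  obtain ⟨C, hC⟩ := posSemidef_iff_eq_transpose_mul_self'.mp hK
  have h : kron3 ρ K =
      ((A ⊗ₖ C).submatrix (Equiv.prodAssoc (Fin d) (Fin d) (Fin dF))
        (Equiv.prodAssoc (Fin d) (Fin d) (Fin dF)))ᴴ *
      ((A ⊗ₖ C).submatrix (Equiv.prodAssoc (Fin d) (Fin d) (Fin dF))
        (Equiv.prodAssoc (Fin d) (Fin d) (Fin dF))) := by
    rw [Matrix.conjTranspose_submatrix, Matrix.submatrix_mul_equiv,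
      kronecker_conjTranspose', ← Matrix.mul_kronecker_mul, ← hA, ← hC]
    rfl
  rw [h]
  exact Matrix.posSemidef_conjTranspose_mul_self _

lemma trace_mul_apply' {n : Type*} [Fintype n] (A B : Matrix n n ℂ) :
    (A * B).trace = ∑ x, ∑ y, A x y * B y x := by
  simp [Matrix.trace, Matrix.diag, Matrix.mul_apply]

lemma posSemidef_trace_nonneg {n : Type*} [Fintype n] {M : Matrix n n ℂ}
    (hM : M.PosSemidef) : 0 ≤ M.trace := by
  classical
  rw [Matrix.trace]
  refine Finset.sum_nonneg fun i _ => ?_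
  have h := hM.dotProduct_mulVec_nonneg (Pi.single i 1)
  simpa [dotProduct, Matrix.mulVec, Pi.single_apply, apply_ite,
    mul_ite, ite_mul, Matrix.diag] using h

lemma trace_mul_nonneg {n : Type*} [Fintype n] [DecidableEq n]
    {A B : Matrix n n ℂ} (hA : A.PosSemidef) (hB : B.PosSemidef) :
    0 ≤ (A * B).trace := by
  obtain ⟨C, hC⟩ := posSemidef_iff_eq_transpose_mul_self'.mp hB
  rw [hC, ← Matrix.mul_assoc, Matrix.trace_mul_cycle]
  exact posSemidef_trace_nonneg (hA.mul_mul_conjTranspose_same C)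

end AuxLemmas
section AuxLemmas2

open Finset

variable {d dF : ℕ}

lemma outer_posSemidef {n : Type*} [Fintype n] [DecidableEq n] (v : n → ℂ) :
    (outer v).PosSemidef := by
  have h : outer v = Matrix.replicateCol Unit v * (Matrix.replicateCol Unit v)ᴴ := by
    rw [Matrix.conjTranspose_replicateCol, ← Matrix.vecMulVec_eq Unit]
    rfl
  rw [h]
  exact Matrix.posSemidef_self_mul_conjTranspose _

lemma trace_outer_mul {n : Type*} [Fintype n] (v : n → ℂ) (M : Matrix n n ℂ) :
    (outer v * M).trace = ∑ x, ∑ y, v x * star (v y) * M y x := by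
  rw [trace_mul_apply']
  simp [outer, Matrix.vecMulVec_apply]

lemma trace_outer_self {n : Type*} [Fintype n] (v : n → ℂ) :
    (outer v).trace = ∑ x, v x * star (v x) := by
  simp [outer, Matrix.trace, Matrix.diag, Matrix.vecMulVec_apply]

lemma trace_outer_mul_outer {n : Type*} [Fintype n] (v u : n → ℂ) :
    (outer v * outer u).trace =
      (∑ x, v x * star (u x)) * (∑ y, u y * star (v y)) := by
  rw [trace_outer_mul, Finset.sum_mul_sum]
  refine Finset.sum_congr rfl fun x _ => Finset.sum_congr rfl fun y _ => ?_
  simp [outer, Matrix.vecMulVec_apply]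
  ring

lemma trace_outer_mul_swap (v : Fin d × Fin d → ℂ) :
    (outer v * swapMat d).trace = ∑ x : Fin d × Fin d, v x * star (v (x.2, x.1)) := by
  rw [trace_outer_mul]
  have h : ∀ x : Fin d × Fin d,
      (∑ y : Fin d × Fin d, v x * star (v y) * swapMat d y x)
        = v x * star (v (x.2, x.1)) := by
    intro x
    rw [Fintype.sum_prod_type]
    simp [swapMat, mul_ite, ite_and]
  exact Finset.sum_congr rfl fun x _ => h x

lemma trace_mul_psym (T : Matrix (Fin d × Fin d) (Fin d × Fin d) ℂ) :
    (T * Psym d).trace = (2:ℂ)⁻¹ * (T.trace + (T * swapMat d).trace) := by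
  simp [Psym, Matrix.mul_add, Matrix.mul_smul, Matrix.trace_add, Matrix.trace_smul,
    smul_eq_mul]
  ring

lemma trace_mul_pasym (T : Matrix (Fin d × Fin d) (Fin d × Fin d) ℂ) :
    (T * Pasym d).trace = (2:ℂ)⁻¹ * (T.trace - (T * swapMat d).trace) := by
  simp [Pasym, Matrix.mul_sub, Matrix.mul_smul, Matrix.trace_sub, Matrix.trace_smul,
    smul_eq_mul]

lemma outer_transpose (ψ : Fin d → ℂ) : (outer ψ)ᵀ = outer (star ψ) := by
  ext i j
  simp [outer, Matrix.vecMulVec_apply, Matrix.transpose_apply]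
  ring

lemma ptrRight_kron3 (ρ : Matrix (Fin d) (Fin d) ℂ)
    (K : Matrix (Fin d × Fin dF) (Fin d × Fin dF) ℂ) :
    ptrRight (kron3 ρ K) = ρ ⊗ₖ ptrRight K := by
  ext x y
  simp [ptrRight, kron3_apply, Matrix.kroneckerMap_apply, Finset.mul_sum]

lemma trace_mul_kron_one {α β : Type*} [Fintype α] [Fintype β] [DecidableEq α] [DecidableEq β]
    (S : Matrix (α × β) (α × β) ℂ) (M : Matrix α α ℂ) :
    (S * (M ⊗ₖ (1 : Matrix β β ℂ))).trace = (ptrRight S * M).trace := by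
  rw [trace_mul_apply', trace_mul_apply']
  simp only [Fintype.sum_prod_type, Matrix.kroneckerMap_apply, Matrix.one_apply,
    mul_ite, mul_one, mul_zero, Finset.sum_ite_eq', Finset.mem_univ, if_true,
    ptrRight, Finset.sum_mul]
  refine Finset.sum_congr rfl fun u _ => ?_
  exact Finset.sum_comm

end AuxLemmas2
section AuxLemmas3

open Finset

variable {d : ℕ}

lemma outer_conjTranspose {n : Type*} [Fintype n] (v : n → ℂ) : (outer v)ᴴ = outer v := by
  ext i j
  simp [outer, Matrix.conjTranspose_apply, Matrix.vecMulVec_apply]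
  ring

lemma outer_mul_self (ψ : Fin d → ℂ) (hψ : star ψ ⬝ᵥ ψ = 1) :
    outer (star ψ) * outer (star ψ) = outer (star ψ) := by
  ext i j
  rw [Matrix.mul_apply]
  have h : ∀ k, outer (star ψ) i k * outer (star ψ) k j
      = outer (star ψ) i j * (star (ψ k) * ψ k) := by
    intro k
    simp [outer, Matrix.vecMulVec_apply]
    ring
  rw [Finset.sum_congr rfl fun k _ => h k, ← Finset.mul_sum]
  have h2 : ∑ k, star (ψ k) * ψ k = 1 := hψ
  rw [h2, mul_one]

lemma q_posSemidef (ψ : Fin d → ℂ) : (outer (star ψ)).PosSemidef :=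
  outer_posSemidef _

lemma one_sub_q_posSemidef (ψ : Fin d → ℂ) (hψ : star ψ ⬝ᵥ ψ = 1) :
    ((1 : Matrix (Fin d) (Fin d) ℂ) - outer (star ψ)).PosSemidef := by
  rw [posSemidef_iff_eq_transpose_mul_self']
  refine ⟨1 - outer (star ψ), ?_⟩
  rw [Matrix.conjTranspose_sub, Matrix.conjTranspose_one, outer_conjTranspose,
    Matrix.sub_mul, Matrix.mul_sub, Matrix.mul_sub, one_mul, mul_one,
    outer_mul_self ψ hψ]
  simp only [one_mul, mul_one]
  abel

lemma swapMat_conjTranspose : (swapMat d)ᴴ = swapMat d := by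
  ext x y
  have h : (y.1 = x.2 ∧ y.2 = x.1) ↔ (x.1 = y.2 ∧ x.2 = y.1) := by
    constructor
    · rintro ⟨h1, h2⟩; exact ⟨h2.symm, h1.symm⟩
    · rintro ⟨h1, h2⟩; exact ⟨h2.symm, h1.symm⟩
  simp [swapMat, Matrix.conjTranspose_apply, apply_ite, h]

lemma swapMat_mul_self : swapMat d * swapMat d = 1 := by
  ext x y
  rw [Matrix.mul_apply]
  rw [Fintype.sum_prod_type]
  simp [swapMat, ite_and, Matrix.one_apply, Prod.ext_iff, mul_ite, eq_comm]

lemma psym_posSemidef : (Psym d).PosSemidef := by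
  rw [posSemidef_iff_eq_transpose_mul_self']
  refine ⟨Psym d, ?_⟩
  have herm : (Psym d)ᴴ = Psym d := by
    simp [Psym, Matrix.conjTranspose_smul, Matrix.conjTranspose_add,
      Matrix.conjTranspose_one, swapMat_conjTranspose]
  rw [herm]
  simp only [Psym, Matrix.smul_mul, Matrix.mul_smul, Matrix.add_mul, Matrix.mul_add,
    one_mul, mul_one, swapMat_mul_self]
  module

lemma pasym_posSemidef : (Pasym d).PosSemidef := by
  rw [posSemidef_iff_eq_transpose_mul_self']
  refine ⟨Pasym d, ?_⟩
  have herm : (Pasym d)ᴴ = Pasym d := by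
    simp [Pasym, Matrix.conjTranspose_smul, Matrix.conjTranspose_sub,
      Matrix.conjTranspose_one, swapMat_conjTranspose]
  rw [herm]
  simp only [Pasym, Matrix.smul_mul, Matrix.mul_smul, Matrix.sub_mul, Matrix.mul_sub,
    one_mul, mul_one, swapMat_mul_self]
  module

/-- Decomposition of the performance operator. -/
lemma omega_decomp (ψ : Fin d → ℂ) :
    OmegaConj ψ =
      (2 * ((d : ℂ) * ((d : ℂ) + 1) / 2))⁻¹ •
          kron3 ((1 : Matrix (Fin d) (Fin d) ℂ) + outer (star ψ)) (Psym d)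
      + (2 * ((d : ℂ) * ((d : ℂ) - 1) / 2))⁻¹ •
          kron3 ((1 : Matrix (Fin d) (Fin d) ℂ) - outer (star ψ)) (Pasym d) := by
  ext x y
  rw [← outer_transpose]
  simp [OmegaConj, kron3_apply, Matrix.add_apply, Matrix.smul_apply, smul_eq_mul]
  ring

end AuxLemmas3
section Upper

open Finset

lemma key_decomp (d : ℕ) (ψ : Fin d → ℂ) :
    kron3 ((2 * (2 * ((d : ℂ) * ((d : ℂ) + 1) / 2))⁻¹) • outer (star ψ)
        + (2 * ((d : ℂ) * ((d : ℂ) - 1) / 2))⁻¹ •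
          ((1 : Matrix (Fin d) (Fin d) ℂ) - outer (star ψ)))
      (1 : Matrix (Fin d × Fin d) (Fin d × Fin d) ℂ)
    = OmegaConj ψ
      + ((((2 * ((d : ℂ) * ((d : ℂ) - 1) / 2))⁻¹ - (2 * ((d : ℂ) * ((d : ℂ) + 1) / 2))⁻¹) •
          kron3 ((1 : Matrix (Fin d) (Fin d) ℂ) - outer (star ψ)) (Psym d)
        + (2 * (2 * ((d : ℂ) * ((d : ℂ) + 1) / 2))⁻¹) •
          kron3 (outer (star ψ)) (Pasym d))) := by
  rw [omega_decomp]
  ext x y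
  have hone : (1 : Matrix (Fin d × Fin d) (Fin d × Fin d) ℂ) (x.1.2, x.2) (y.1.2, y.2)
      = Psym d (x.1.2, x.2) (y.1.2, y.2) + Pasym d (x.1.2, x.2) (y.1.2, y.2) := by
    simp [Psym, Pasym, Matrix.smul_apply, Matrix.add_apply, Matrix.sub_apply, smul_eq_mul]
    ring
  simp only [kron3_apply, Matrix.add_apply, Matrix.smul_apply, Matrix.sub_apply,
    smul_eq_mul, hone]
  ring

lemma kron3_one_one (d : ℕ) (X : Matrix (Fin d) (Fin d) ℂ) :
    kron3 X (1 : Matrix (Fin d × Fin d) (Fin d × Fin d) ℂ)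
      = (X ⊗ₖ (1 : Matrix (Fin d) (Fin d) ℂ)) ⊗ₖ (1 : Matrix (Fin d) (Fin d) ℂ) := by
  ext x y
  simp only [kron3_apply, Matrix.kroneckerMap_apply, Matrix.one_apply, Prod.ext_iff,
    ite_and, mul_ite, mul_one, mul_zero, mul_assoc]
  by_cases h1 : x.1.2 = y.1.2 <;> by_cases h2 : x.2 = y.2 <;> simp [h1, h2]

lemma upper_bound {d : ℕ} (hd : 2 ≤ d) (ψ : Fin d → ℂ) (hψ : star ψ ⬝ᵥ ψ = 1)
    {S : Matrix ((Fin d × Fin d) × Fin d) ((Fin d × Fin d) × Fin d) ℂ}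
    (hS : IsSuperchannel S) {r : ℝ} (hr : (S * OmegaConj ψ).trace = (r : ℂ)) :
    r ≤ if d = 2 then (1 : ℝ) else 2 / ((d : ℝ) + 1) := by
  obtain ⟨hpsd, σ, hσ, hσtr, hptr⟩ := hS
  set A : ℂ := (2 * ((d : ℂ) * ((d : ℂ) + 1) / 2))⁻¹ with hA
  set B : ℂ := (2 * ((d : ℂ) * ((d : ℂ) - 1) / 2))⁻¹ with hB
  set Q : Matrix (Fin d) (Fin d) ℂ := outer (star ψ) with hQdef
  set X : Matrix (Fin d) (Fin d) ℂ := (2 * A) • Q + B • (1 - Q) with hXdef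
  -- real forms of the coefficients
  set aR : ℝ := ((d : ℝ) * ((d : ℝ) + 1))⁻¹ with haR
  set bR : ℝ := ((d : ℝ) * ((d : ℝ) - 1))⁻¹ with hbR
  have hdR : (2 : ℝ) ≤ (d : ℝ) := by exact_mod_cast hd
  have hAC : A = ((aR : ℝ) : ℂ) := by
    rw [hA, haR]
    push_cast
    rw [_root_.inv_inj]
    ring
  have hBC : B = ((bR : ℝ) : ℂ) := by
    rw [hB, hbR]
    push_cast
    rw [_root_.inv_inj]
    ring
  have haR0 : 0 ≤ aR := by rw [haR]; positivity
  have hbR0 : 0 ≤ bR := by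
    rw [hbR]
    have : (0:ℝ) ≤ (d : ℝ) * ((d : ℝ) - 1) := by nlinarith
    positivity
  have habR : aR ≤ bR := by
    rw [haR, hbR]
    apply inv_anti₀
    · nlinarith
    · nlinarith
  -- the dual certificate decomposition
  have hX : S * kron3 X (1 : Matrix (Fin d × Fin d) (Fin d × Fin d) ℂ)
      = S * OmegaConj ψ
        + ((B - A) • (S * kron3 (1 - Q) (Psym d)) + (2 * A) • (S * kron3 Q (Pasym d))) := by
    rw [hXdef, hA, hB, hQdef, key_decomp d ψ]
    simp only [Matrix.mul_add, Matrix.mul_smul]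
  have h1 : 0 ≤ (S * kron3 (1 - Q) (Psym d)).trace :=
    trace_mul_nonneg hpsd (kron3_posSemidef (one_sub_q_posSemidef ψ hψ) psym_posSemidef)
  have h2 : 0 ≤ (S * kron3 Q (Pasym d)).trace :=
    trace_mul_nonneg hpsd (kron3_posSemidef (q_posSemidef ψ) pasym_posSemidef)
  have hBA : 0 ≤ B - A := by
    rw [hAC, hBC, ← Complex.ofReal_sub]
    rw [Complex.zero_le_real]
    linarith
  have h2A : 0 ≤ 2 * A := by
    rw [hAC]
    have : ((2:ℝ) : ℂ) * ((aR : ℝ) : ℂ) = (((2 * aR : ℝ)) : ℂ) := by push_cast; ring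
    rw [show (2:ℂ) = ((2:ℝ):ℂ) by norm_num, this, Complex.zero_le_real]
    linarith
  -- trace inequality
  have htr : (r : ℂ) ≤ (S * kron3 X (1 : Matrix (Fin d × Fin d) (Fin d × Fin d) ℂ)).trace := by
    rw [hX, Matrix.trace_add, Matrix.trace_add, Matrix.trace_smul, Matrix.trace_smul, hr,
      smul_eq_mul, smul_eq_mul]
    exact le_add_of_nonneg_right (add_nonneg (mul_nonneg hBA h1) (mul_nonneg h2A h2))
  -- compute the trace of the certificate
  set t : ℂ := (σ * Q).trace with htdef
  have hval : (S * kron3 X (1 : Matrix (Fin d × Fin d) (Fin d × Fin d) ℂ)).trace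
      = (2 * A * t + B * (1 - t)) * d := by
    rw [kron3_one_one, trace_mul_kron_one, hptr,
      show (σ ⊗ₖ (1 : Matrix (Fin d) (Fin d) ℂ)) * (X ⊗ₖ (1 : Matrix (Fin d) (Fin d) ℂ))
          = (σ * X) ⊗ₖ ((1 : Matrix (Fin d) (Fin d) ℂ) * 1) from
        (Matrix.mul_kronecker_mul σ X 1 1).symm,
      Matrix.one_mul, Matrix.trace_kronecker, Matrix.trace_one]
    have : (σ * X).trace = 2 * A * t + B * (1 - t) := by
      rw [hXdef, Matrix.mul_add, Matrix.mul_smul, Matrix.mul_smul, Matrix.trace_add,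
        Matrix.trace_smul, Matrix.trace_smul, Matrix.mul_sub, Matrix.mul_one,
        Matrix.trace_sub, hσtr, ← htdef]
      simp [smul_eq_mul]
    rw [this]
    simp [Fintype.card_fin, mul_comm]
  have ht0 : 0 ≤ t := trace_mul_nonneg hσ (q_posSemidef ψ)
  have ht1 : 0 ≤ 1 - t := by
    have h := trace_mul_nonneg hσ (one_sub_q_posSemidef ψ hψ)
    rwa [Matrix.mul_sub, Matrix.mul_one, Matrix.trace_sub, hσtr] at h
  have htim : t.im = 0 := by
    have := (Complex.le_def.mp ht0).2
    simpa using this.symm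
  have htC : t = ((t.re : ℝ) : ℂ) := by
    apply Complex.ext
    · simp
    · simp [htim]
  set tR : ℝ := t.re with htRdef
  have htR0 : 0 ≤ tR := by
    have := (Complex.le_def.mp ht0).1
    simpa using this
  have htR1 : tR ≤ 1 := by
    have := (Complex.le_def.mp ht1).1
    simp [Complex.sub_re] at this
    linarith
  have hcast : (2 * A * t + B * (1 - t)) * (d : ℂ)
      = (((2 * aR * tR + bR * (1 - tR)) * (d : ℝ) : ℝ) : ℂ) := by
    rw [hAC, hBC, htC]
    push_cast
    ring
  have hineq : r ≤ (2 * aR * tR + bR * (1 - tR)) * (d : ℝ) := by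
    rw [← Complex.real_le_real]
    calc (r : ℂ) ≤ (S * kron3 X (1 : Matrix (Fin d × Fin d) (Fin d × Fin d) ℂ)).trace := htr
    _ = (((2 * aR * tR + bR * (1 - tR)) * (d : ℝ) : ℝ) : ℂ) := by rw [hval, hcast]
  by_cases hd2 : d = 2
  · subst hd2
    rw [if_pos rfl]
    rw [haR, hbR] at hineq
    norm_num at hineq
    linarith
  · rw [if_neg hd2]
    have h3 : 3 ≤ d := by omega
    have hd3 : (3 : ℝ) ≤ (d : ℝ) := by exact_mod_cast h3
    set D : ℝ := (d : ℝ) with hDdef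
    have e1 : aR * D = (D + 1)⁻¹ := by
      rw [haR]
      field_simp
    have e2 : bR * D = (D - 1)⁻¹ := by
      rw [hbR]
      rw [eq_comm, inv_eq_iff_eq_inv, eq_comm]
      field_simp
    have key : (2 * aR * tR + bR * (1 - tR)) * D
        = 2 * (D + 1)⁻¹ * tR + (D - 1)⁻¹ * (1 - tR) := by
      calc (2 * aR * tR + bR * (1 - tR)) * D
          = 2 * tR * (aR * D) + (1 - tR) * (bR * D) := by ring
      _ = 2 * (D + 1)⁻¹ * tR + (D - 1)⁻¹ * (1 - tR) := by rw [e1, e2]; ring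
    have hle : (D - 1)⁻¹ ≤ 2 * (D + 1)⁻¹ := by
      rw [inv_eq_one_div, show 2 * (D + 1)⁻¹ = 2 / (D + 1) by rw [inv_eq_one_div]; ring,
        div_le_div_iff₀ (by linarith) (by linarith)]
      linarith
    have hprod := mul_le_mul_of_nonneg_left hle (sub_nonneg.mpr htR1)
    have hfin : 2 * (D + 1)⁻¹ * tR + (D - 1)⁻¹ * (1 - tR) ≤ 2 * (D + 1)⁻¹ := by
      nlinarith
    have : r ≤ 2 * (D + 1)⁻¹ := by
      rw [key] at hineq
      linarith
    rw [show 2 / (D + 1) = 2 * (D + 1)⁻¹ by rw [inv_eq_one_div]; ring]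
    exact this

end Upper
section Witness

open Finset

lemma trace_kron3_omega {d : ℕ} (ψ : Fin d → ℂ) (ρ : Matrix (Fin d) (Fin d) ℂ)
    (K : Matrix (Fin d × Fin d) (Fin d × Fin d) ℂ) :
    (kron3 ρ K * OmegaConj ψ).trace
      = (2 * ((d : ℂ) * ((d : ℂ) + 1) / 2))⁻¹ *
          ((ρ * (1 + outer (star ψ))).trace * (K * Psym d).trace)
      + (2 * ((d : ℂ) * ((d : ℂ) - 1) / 2))⁻¹ *
          ((ρ * (1 - outer (star ψ))).trace * (K * Pasym d).trace) := by
  rw [omega_decomp, Matrix.mul_add, Matrix.mul_smul, Matrix.mul_smul, Matrix.trace_add,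
    Matrix.trace_smul, Matrix.trace_smul, kron3_mul, kron3_mul, trace_kron3, trace_kron3]
  simp [smul_eq_mul]

lemma choiProj_posSemidef {d : ℕ} (V : Matrix (Fin d) (Fin d) ℂ) :
    (choiProj V).PosSemidef := by
  rw [choiProj]; exact outer_posSemidef _

lemma witness_super {d : ℕ} (χ : Fin d → ℂ) (hχ : (outer χ).trace = 1)
    (V : Matrix (Fin d) (Fin d) ℂ) (hV : ptrRight (choiProj V) = 1) :
    IsSuperchannel (kron3 (outer χ) (choiProj V)) := by
  refine ⟨kron3_posSemidef (outer_posSemidef χ) (choiProj_posSemidef V),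
    outer χ, outer_posSemidef χ, hχ, ?_⟩
  rw [ptrRight_kron3, hV]

lemma trace_outer_star {d : ℕ} (ψ : Fin d → ℂ) (hψ : star ψ ⬝ᵥ ψ = 1) :
    (outer (star ψ)).trace = 1 := by
  rw [trace_outer_self]
  simpa [dotProduct] using hψ

lemma ptrRight_choiProj_one {d : ℕ} :
    ptrRight (choiProj (1 : Matrix (Fin d) (Fin d) ℂ)) = 1 := by
  ext o o'
  simp [ptrRight, choiProj, outer, Matrix.vecMulVec_apply, choiVec, Matrix.one_apply,
    apply_ite (star : ℂ → ℂ), ite_mul, mul_ite, mul_one, mul_zero, Finset.sum_ite_eq']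
  rcases eq_or_ne o o' with h | h
  · simp [h]
  · rw [if_neg (fun hh => h hh.symm), if_neg h]

lemma choiProj_one_trace {d : ℕ} :
    (choiProj (1 : Matrix (Fin d) (Fin d) ℂ)).trace = d := by
  rw [choiProj, trace_outer_self]
  simp [choiVec, Matrix.one_apply, Fintype.sum_prod_type,
    apply_ite (star : ℂ → ℂ), ite_mul, mul_ite, mul_one, mul_zero, Finset.sum_ite_eq']

lemma choiProj_one_swap_trace {d : ℕ} :
    (choiProj (1 : Matrix (Fin d) (Fin d) ℂ) * swapMat d).trace = d := by
  rw [choiProj, trace_outer_mul_swap]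
  simp [choiVec, Matrix.one_apply, Fintype.sum_prod_type,
    apply_ite (star : ℂ → ℂ), ite_mul, mul_ite, mul_one, mul_zero, Finset.sum_ite_eq']

lemma witness1_value {d : ℕ} (hd : 2 ≤ d) (ψ : Fin d → ℂ) (hψ : star ψ ⬝ᵥ ψ = 1) :
    (kron3 (outer (star ψ)) (choiProj (1 : Matrix (Fin d) (Fin d) ℂ)) * OmegaConj ψ).trace
      = ((2 / ((d : ℝ) + 1) : ℝ) : ℂ) := by
  have hQ1 : (outer (star ψ)).trace = 1 := trace_outer_star ψ hψ
  have hT1 : ((outer (star ψ)) * (1 + outer (star ψ))).trace = 2 := by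
    rw [Matrix.mul_add, Matrix.mul_one, Matrix.trace_add, hQ1, outer_mul_self ψ hψ, hQ1]
    norm_num
  have hT2 : ((outer (star ψ)) * (1 - outer (star ψ))).trace = 0 := by
    rw [Matrix.mul_sub, Matrix.mul_one, Matrix.trace_sub, hQ1, outer_mul_self ψ hψ, hQ1]
    ring
  have hK1 : (choiProj (1 : Matrix (Fin d) (Fin d) ℂ) * Psym d).trace = d := by
    rw [trace_mul_psym, choiProj_one_trace, choiProj_one_swap_trace]
    ring
  have hK2 : (choiProj (1 : Matrix (Fin d) (Fin d) ℂ) * Pasym d).trace = 0 := by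
    rw [trace_mul_pasym, choiProj_one_trace, choiProj_one_swap_trace]
    ring
  rw [trace_kron3_omega, hT1, hT2, hK1, hK2]
  have h1 : ((d : ℂ)) ≠ 0 := Nat.cast_ne_zero.mpr (by omega)
  have h2 : ((d : ℂ)) + 1 ≠ 0 := by
    have h : ((d : ℂ)) + 1 = ((d + 1 : ℕ) : ℂ) := by push_cast; ring
    rw [h]
    exact Nat.cast_ne_zero.mpr (by omega)
  have h3 : ((d : ℝ)) + 1 ≠ 0 := by positivity
  push_cast
  field_simp
  ring

lemma ptrRight_choiProj_Y :
    ptrRight (choiProj (!![0, -1; 1, 0] : Matrix (Fin 2) (Fin 2) ℂ)) = 1 := by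
  ext o o'
  fin_cases o <;> fin_cases o' <;>
    simp [ptrRight, choiProj, outer, Matrix.vecMulVec_apply, choiVec, Fin.sum_univ_two,
      Matrix.one_apply]

lemma witness2_value (ψ : Fin 2 → ℂ) (hψ : star ψ ⬝ᵥ ψ = 1) :
    (kron3 (outer ![-(ψ 1), ψ 0]) (choiProj (!![0, -1; 1, 0] : Matrix (Fin 2) (Fin 2) ℂ))
        * OmegaConj ψ).trace = ((1 : ℝ) : ℂ) := by
  have hψ' : (starRingEnd ℂ) (ψ 0) * ψ 0 + (starRingEnd ℂ) (ψ 1) * ψ 1 = 1 := by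
    simpa [dotProduct, Fin.sum_univ_two, Complex.star_def] using hψ
  have htrχ : (outer ![-(ψ 1), ψ 0]).trace = 1 := by
    rw [trace_outer_self]
    simp [Fin.sum_univ_two, star_neg, Complex.star_def]
    linear_combination hψ'
  have hover : (outer ![-(ψ 1), ψ 0] * outer (star ψ)).trace = 0 := by
    rw [trace_outer_mul_outer]
    have h : (∑ x : Fin 2, (![-(ψ 1), ψ 0]) x * star ((star ψ) x)) = 0 := by
      simp [Fin.sum_univ_two]
      ring
    rw [h, zero_mul]
  have hT1 : (outer ![-(ψ 1), ψ 0] * (1 + outer (star ψ))).trace = 1 := by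
    rw [Matrix.mul_add, Matrix.mul_one, Matrix.trace_add, htrχ, hover]
    ring
  have hT2 : (outer ![-(ψ 1), ψ 0] * (1 - outer (star ψ))).trace = 1 := by
    rw [Matrix.mul_sub, Matrix.mul_one, Matrix.trace_sub, htrχ, hover]
    ring
  have hK0 : (choiProj (!![0, -1; 1, 0] : Matrix (Fin 2) (Fin 2) ℂ)).trace = 2 := by
    rw [choiProj, trace_outer_self]
    simp [choiVec, Fintype.sum_prod_type, Fin.sum_univ_two]
    norm_num
  have hKsw : (choiProj (!![0, -1; 1, 0] : Matrix (Fin 2) (Fin 2) ℂ) * swapMat 2).trace = -2 := by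
    rw [choiProj, trace_outer_mul_swap]
    simp [choiVec, Fintype.sum_prod_type, Fin.sum_univ_two]
    norm_num
  have hK1 : (choiProj (!![0, -1; 1, 0] : Matrix (Fin 2) (Fin 2) ℂ) * Psym 2).trace = 0 := by
    rw [trace_mul_psym, hK0, hKsw]
    ring
  have hK2 : (choiProj (!![0, -1; 1, 0] : Matrix (Fin 2) (Fin 2) ℂ) * Pasym 2).trace = 2 := by
    rw [trace_mul_pasym, hK0, hKsw]
    ring
  rw [trace_kron3_omega, hT1, hT2, hK1, hK2]
  norm_num

end Witness
lemma trace_outer_chi (ψ : Fin 2 → ℂ) (hψ : star ψ ⬝ᵥ ψ = 1) :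
    (outer ![-(ψ 1), ψ 0]).trace = 1 := by
  have hψ' : (starRingEnd ℂ) (ψ 0) * ψ 0 + (starRingEnd ℂ) (ψ 1) * ψ 1 = 1 := by
    simpa [dotProduct, Fin.sum_univ_two, Complex.star_def] using hψ
  rw [trace_outer_self]
  simp [Fin.sum_univ_two, star_neg, Complex.star_def]
  linear_combination hψ'

/-- **Optimal deterministic (approximate) unitary complex conjugation on a known
pure state, single call.** The maximum of `Tr(S Ω)` over single-call deterministic
superchannels `S` is `1` if `d = 2` and `2/(d+1)` if `d > 2`, and it is attained. -/
theorem deterministic_conjugation_optimal_fidelity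
    (d : ℕ) (hd : 2 ≤ d) (ψ : Fin d → ℂ) (hψ : star ψ ⬝ᵥ ψ = 1) :
    IsGreatest
      {r : ℝ |
        ∃ S : Matrix ((Fin d × Fin d) × Fin d) ((Fin d × Fin d) × Fin d) ℂ,
          IsSuperchannel S ∧ (S * OmegaConj ψ).trace = (r : ℂ)}
      (if d = 2 then (1 : ℝ) else 2 / ((d : ℝ) + 1)) := by
  constructor
  · by_cases hd2 : d = 2
    · subst hd2
      simp only [Set.mem_setOf_eq, if_pos rfl]
      exact ⟨kron3 (outer ![-(ψ 1), ψ 0])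
          (choiProj (!![0, -1; 1, 0] : Matrix (Fin 2) (Fin 2) ℂ)),
        witness_super _ (trace_outer_chi ψ hψ) _ ptrRight_choiProj_Y,
        witness2_value ψ hψ⟩
    · simp only [Set.mem_setOf_eq, if_neg hd2]
      exact ⟨kron3 (outer (star ψ)) (choiProj (1 : Matrix (Fin d) (Fin d) ℂ)),
        witness_super _ (trace_outer_star ψ hψ) _ ptrRight_choiProj_one,
        witness1_value hd ψ hψ⟩
  · rintro r ⟨S, hS, htr⟩
    exact upper_bound hd ψ hψ hS htr
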